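/- Let N ≥ 1 and T ≥ 1 be integers, ε > 0, and for each i = 1,…,N let β_i ≥ 0 and let s_i(0), s_i(1), …, s_i(T) be real numbers with s_i(0) = 0 and s_i(t) ≥ 0 for all t. Then ∑_{t=1}^T ∑_{i=1}^N β_i·ln((s_i(t) + ε/N)/(s_i(t−1) + ε/N))·s_i(t) ≥ 0. -/

import Mathlib

lemma reg_key (a b c : ℝ) (ha : 0 ≤ a) (hb : 0 ≤ b) (hc : 0 < c) :
    (b - c * Real.log (b + c)) - (a - c * Real.log (a + c))
      ≤ Real.log ((b + c) / (a + c)) * b := by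
  have hbc : 0 < b + c := by linarith
  have hac : 0 < a + c := by linarith
  have hlog : Real.log ((b + c) / (a + c)) = Real.log (b + c) - Real.log (a + c) :=
    Real.log_div (ne_of_gt hbc) (ne_of_gt hac)
  set L := Real.log (b + c) - Real.log (a + c) with hL
  have h1 : Real.log ((a + c) / (b + c)) ≤ (a + c) / (b + c) - 1 :=
    Real.log_le_sub_one_of_pos (by positivity)
  have h2 : Real.log ((a + c) / (b + c)) = -L := by
    rw [Real.log_div (ne_of_gt hac) (ne_of_gt hbc)]; ring
  have h3 : (b - a) / (b + c) ≤ L := by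
    rw [h2] at h1
    have : 1 - (a + c) / (b + c) ≤ L := by linarith
    have he : (b - a) / (b + c) = 1 - (a + c) / (b + c) := by
      field_simp; ring
    linarith [he ▸ this]
  have h4 : b - a ≤ L * (b + c) := by
    have := (div_le_iff₀ hbc).mp h3
    linarith
  rw [hlog]
  nlinarith
lemma reg_F0 (x c : ℝ) (hx : 0 ≤ x) (hc : 0 < c) :
    -(c * Real.log c) ≤ x - c * Real.log (x + c) := by
  have hxc : 0 < x + c := by linarith
  have h1 : Real.log ((x + c) / c) ≤ (x + c) / c - 1 :=
    Real.log_le_sub_one_of_pos (by positivity)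
  rw [Real.log_div (ne_of_gt hxc) (ne_of_gt hc)] at h1
  have : (x + c) / c - 1 = x / c := by field_simp; ring
  rw [this] at h1
  have h2 : c * (Real.log (x + c) - Real.log c) ≤ c * (x / c) :=
    mul_le_mul_of_nonneg_left h1 hc.le
  have : c * (x / c) = x := by field_simp
  nlinarith

lemma reg_telescope (g : ℕ → ℝ) (T : ℕ) :
    ∑ t ∈ Finset.Icc 1 T, (g t - g (t - 1)) = g T - g 0 := by
  induction T with
  | zero => simp
  | succ n ih =>
    rw [Finset.sum_Icc_succ_top (by omega : 1 ≤ n + 1), ih]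
    simp

/-- The accumulated regularization term is nonnegative (`C ≥ 0`). -/
theorem regularization_term_nonneg
    (N T : ℕ) (hN : 1 ≤ N) (hT : 1 ≤ T)
    (ε : ℝ) (hε : 0 < ε)
    (β : Fin N → ℝ) (hβ : ∀ i, 0 ≤ β i)
    (s : Fin N → ℕ → ℝ)
    (hs0 : ∀ i, s i 0 = 0)
    (hs : ∀ i t, 0 ≤ s i t) :
    0 ≤ ∑ t ∈ Finset.Icc 1 T, ∑ i,
        β i * Real.log ((s i t + ε / N) / (s i (t - 1) + ε / N)) * s i t := by
  have hc : 0 < ε / N := by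
    apply div_pos hε
    exact_mod_cast Nat.pos_of_ne_zero (by omega)
  set c := ε / N with hcdef
  rw [Finset.sum_comm]
  apply Finset.sum_nonneg
  intro i _
  have hfac : ∑ t ∈ Finset.Icc 1 T,
      β i * Real.log ((s i t + c) / (s i (t - 1) + c)) * s i t
      = β i * ∑ t ∈ Finset.Icc 1 T,
        Real.log ((s i t + c) / (s i (t - 1) + c)) * s i t := by
    rw [Finset.mul_sum]; congr 1; ext t; ring
  rw [hfac]
  apply mul_nonneg (hβ i)
  have hstep : ∑ t ∈ Finset.Icc 1 T,
      ((s i t - c * Real.log (s i t + c)) - (s i (t-1) - c * Real.log (s i (t-1) + c)))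
      ≤ ∑ t ∈ Finset.Icc 1 T, Real.log ((s i t + c) / (s i (t - 1) + c)) * s i t := by
    apply Finset.sum_le_sum
    intro t _
    exact reg_key (s i (t-1)) (s i t) c (hs i (t-1)) (hs i t) hc
  have htel := reg_telescope (fun t => s i t - c * Real.log (s i t + c)) T
  rw [htel] at hstep
  have hF0 := reg_F0 (s i T) c (hs i T) hc
  have h0 : s i 0 - c * Real.log (s i 0 + c) = c * Real.log c - c * Real.log c + (- (c * Real.log c)) + 0 := by
    rw [hs0 i]; ring_nf
  simp only [hs0 i, zero_add, zero_sub] at hstep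
  linarith
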